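/- Let n ≥ 6 be even. There exist c > 0 and L₀ ≥ 1 such that for all real L ≥ L₀, the number of monic polynomials f ∈ ℤ[X] of degree n, all of whose coefficients have absolute value at most L, having n distinct complex roots r₁,…,r_n and satisfying ∏_{1≤i<j≤n}(r_i − r_j)² = q² for some nonzero rational number q (that is, the discriminant of f is a nonzero rational square), is at least c·L^((n−1)/2). -/

import Mathlib

open Polynomial

open Finset


section Fam
variable (m : ℕ) (a : Fin m → ℤ) (t : ℤ)

noncomputable def myS : ℤ[X] := ∑ i : Fin m, C (a i) * X ^ (i : ℕ)
noncomputable def myh : ℤ[X] := X ^ m + myS m a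
noncomputable def myg : ℤ[X] := myh m a + C ((-1) ^ m * t ^ 2)

lemma myS_coeff (k : ℕ) : (myS m a).coeff k = if h : k < m then a ⟨k, h⟩ else 0 := by
  rw [myS, finset_sum_coeff]
  split
  · next h =>
    rw [Finset.sum_eq_single (⟨k, h⟩ : Fin m)]
    · simp
    · intro b _ hb
      rw [coeff_C_mul_X_pow]
      simp only [ite_eq_right_iff]
      intro hkb
      exact absurd (Fin.ext hkb.symm : b = ⟨k, h⟩) hb
    · simp
  · next h =>
    apply Finset.sum_eq_zero
    intro b _
    rw [coeff_C_mul_X_pow]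
    simp only [ite_eq_right_iff]
    intro hkb
    exact absurd (hkb ▸ b.isLt) h

lemma myS_degree_lt (hm : 0 < m) : (myS m a).degree < (m : ℕ) := by
  apply lt_of_le_of_lt (degree_sum_le _ _)
  rw [Finset.sup_lt_iff (by exact_mod_cast WithBot.bot_lt_coe m)]
  intro i _
  apply lt_of_le_of_lt (degree_C_mul_X_pow_le _ _)
  exact_mod_cast WithBot.coe_lt_coe.mpr i.isLt

lemma mylow_degree_lt (hm : 0 < m) :
    ((myS m a) + C ((-1) ^ m * t ^ 2)).degree < (m : WithBot ℕ) := by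
  apply lt_of_le_of_lt (degree_add_le _ _)
  refine max_lt (myS_degree_lt m a hm) (lt_of_le_of_lt degree_C_le ?_)
  exact_mod_cast WithBot.coe_lt_coe.mpr hm

lemma myg_eq : myg m a t = X ^ m + ((myS m a) + C ((-1) ^ m * t ^ 2)) := by
  rw [myg, myh]; ring

lemma myg_monic (hm : 0 < m) : (myg m a t).Monic := by
  rw [myg_eq]
  exact monic_X_pow_add (mylow_degree_lt m a t hm)

lemma myg_natDegree (hm : 0 < m) : (myg m a t).natDegree = m := by
  rw [myg_eq]
  rw [natDegree_eq_of_degree_eq_some]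
  rw [degree_add_eq_left_of_degree_lt]
  · exact degree_X_pow m
  · rw [degree_X_pow]; exact mylow_degree_lt m a t hm

lemma myg_coeff_zero (hm : 0 < m) (ha0 : a ⟨0, hm⟩ = 0) :
    (myg m a t).coeff 0 = (-1) ^ m * t ^ 2 := by
  rw [myg, myh]
  simp only [coeff_add, coeff_X_pow, coeff_C_zero, myS_coeff]
  rw [if_neg (Nat.pos_iff_ne_zero.mp hm).symm, dif_pos hm, ha0]
  ring

lemma myg_coeff_mid (k : ℕ) (h0 : 0 < k) (hk : k < m) :
    (myg m a t).coeff k = a ⟨k, hk⟩ := by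
  rw [myg, myh]
  simp only [coeff_add, coeff_X_pow, myS_coeff, coeff_C]
  rw [if_neg (Nat.ne_of_lt hk), dif_pos hk, if_neg (Nat.pos_iff_ne_zero.mp h0)]
  ring


end Fam

lemma galois_fixed_rat {K : Type*} [Field K] [Algebra ℚ K] [FiniteDimensional ℚ K]
    [IsGalois ℚ K] (x : K) (hx : ∀ σ : K ≃ₐ[ℚ] K, σ x = x) :
    ∃ e : ℚ, algebraMap ℚ K e = x := by
  have h : IntermediateField.fixedField (⊤ : Subgroup (K ≃ₐ[ℚ] K)) = ⊥ :=
    ((IsGalois.tfae (F := ℚ) (E := K)).out 0 1 rfl rfl).mp inferInstance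
  have hmem : x ∈ IntermediateField.fixedField (⊤ : Subgroup (K ≃ₐ[ℚ] K)) := by
    intro σ
    exact hx σ
  rw [h, IntermediateField.mem_bot] at hmem
  obtain ⟨e, he⟩ := hmem
  exact ⟨e, he⟩

lemma exists_enum_roots (m : ℕ) (hm : 0 < m) (F : ℚ[X]) (hmo : F.Monic) (hdeg : F.natDegree = m)
    (hsep : F.Separable) :
    ∃ (s : Fin m → ℂ) (e : ℚ), Function.Injective s ∧
      F.map (algebraMap ℚ ℂ) = ∏ i, (X - C (s i)) ∧ e ≠ 0 ∧
      (e : ℂ) = ∏ i, ∏ j ∈ Finset.univ.erase i, (s i - s j) := by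
  classical
  set K := F.SplittingField
  have hsplits : (F.map (algebraMap ℚ K)).Splits :=
    SplittingField.splits F
  set FK := F.map (algebraMap ℚ K) with hFK
  have hFKmo : FK.Monic := hmo.map _
  have hFKdeg : FK.natDegree = m := by rw [hFK, natDegree_map, hdeg]
  have hcard : FK.roots.card = m := by rw [splits_iff_card_roots.mp hsplits, hFKdeg]
  have hnodup : FK.roots.Nodup := nodup_roots (hsep.map)
  set ℓ := FK.roots.toList with hℓ
  have hlen : ℓ.length = m := by rw [hℓ, Multiset.length_toList, hcard]
  have hℓnodup : ℓ.Nodup := by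
    have := Multiset.coe_toList FK.roots
    rw [hℓ, ← Multiset.coe_nodup, this]
    exact hnodup
  set st : Fin m → K := fun i => ℓ.get (Fin.cast hlen.symm i) with hst
  have hstinj : Function.Injective st := by
    intro i j hij
    have := List.nodup_iff_injective_get.mp hℓnodup hij
    simpa [Fin.ext_iff] using this
  have hstmem : ∀ i, st i ∈ FK.roots := by
    intro i
    show ℓ.get _ ∈ FK.roots
    exact Multiset.mem_toList.mp (List.get_mem ℓ (Fin.cast hlen.symm i))
  have hstfull : ∀ x ∈ FK.roots, ∃ i, st i = x := by
    intro x hx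
    have : x ∈ ℓ := Multiset.mem_toList.mpr hx
    obtain ⟨j, hj⟩ := List.mem_iff_get.mp this
    exact ⟨Fin.cast hlen j, hj⟩
  have hprodK : FK = ∏ i, (X - C (st i)) := by
    have h1 := hsplits.eq_prod_roots_of_monic hFKmo
    rw [h1]
    have h2 : FK.roots = (ℓ : Multiset K) := by rw [hℓ, Multiset.coe_toList]
    rw [h2, Multiset.map_coe, Multiset.prod_coe]
    have h3 : ℓ.map (fun a => X - C a) = List.ofFn (fun i : Fin ℓ.length => X - C (ℓ.get i)) := by
      conv_lhs => rw [← List.ofFn_get ℓ]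
      rw [List.map_ofFn, ← List.ofFn_get ℓ]
      rfl
    rw [h3, List.prod_ofFn]
    exact Fintype.prod_equiv (finCongr hlen) (fun i => X - C (ℓ.get i))
      (fun i => X - C (st i)) (fun i => rfl)
  set Et : K := ∏ i, ∏ j ∈ Finset.univ.erase i, (st i - st j) with hEt
  have hEtfix : ∀ σ : K ≃ₐ[ℚ] K, σ Et = Et := by
    intro σ
    -- σ maps roots to roots
    have hroot : ∀ i, σ (st i) ∈ FK.roots := by
      intro i
      rw [mem_roots hFKmo.ne_zero]
      have h0 : aeval (st i) F = 0 := by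
        have := hstmem i
        rw [mem_roots hFKmo.ne_zero] at this
        rwa [IsRoot, hFK, eval_map, ← aeval_def] at this
      have h5 : aeval (σ (st i)) F = σ (aeval (st i) F) := by
        simpa using (aeval_algHom_apply (σ : K →ₐ[ℚ] K) (st i) F)
      rw [IsRoot, hFK, eval_map, ← aeval_def]
      rw [h5, h0, map_zero]
    choose u hu using fun i => hstfull (σ (st i)) (hroot i)
    have huinj : Function.Injective u := by
      intro i j hij
      apply hstinj
      apply σ.injective
      rw [← hu i, ← hu j, hij]
    have hubij : Function.Bijective u := (Finite.injective_iff_bijective).mp huinj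
    have key : ∀ i : Fin m, ∏ j ∈ Finset.univ.erase (u i), (st (u i) - st j)
        = ∏ j ∈ Finset.univ.erase i, (st (u i) - st (u j)) := by
      intro i
      refine (Finset.prod_nbij (i := fun j => u j) ?_ ?_ ?_ (fun j _ => rfl)).symm
      · intro j hj
        simp only [mem_erase, mem_univ, and_true] at hj ⊢
        exact fun h => hj (huinj h)
      · intro x hx y hy hxy
        exact huinj hxy
      · intro x hx
        obtain ⟨y, hy⟩ := hubij.2 x
        refine ⟨y, ?_, hy⟩
        simp only [coe_erase, Set.mem_diff, Set.mem_compl_iff, Set.mem_singleton_iff,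
          Finset.coe_univ, Set.mem_univ, true_and] at hx ⊢
        intro h
        exact hx (by rw [← hy, h])
    calc σ Et = ∏ i, ∏ j ∈ Finset.univ.erase i, (st (u i) - st (u j)) := by
          rw [hEt, map_prod]
          refine Finset.prod_congr rfl fun i _ => ?_
          rw [map_prod]
          refine Finset.prod_congr rfl fun j _ => ?_
          rw [map_sub, hu i, hu j]
      _ = ∏ i, ∏ j ∈ Finset.univ.erase (u i), (st (u i) - st j) := by
          exact (Finset.prod_congr rfl fun i _ => (key i)).symm
      _ = Et := by
          rw [hEt]
          exact Function.Bijective.prod_comp hubij (fun i => ∏ j ∈ Finset.univ.erase i, (st i - st j))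
  haveI : IsSplittingField ℚ K F := Polynomial.IsSplittingField.splittingField F
  have : IsGalois ℚ K := IsGalois.of_separable_splitting_field hsep
  obtain ⟨e, he⟩ := galois_fixed_rat Et hEtfix
  -- embed into ℂ
  let ι : K →ₐ[ℚ] ℂ := IsAlgClosed.lift
  refine ⟨fun i => ι (st i), e, ?_, ?_, ?_, ?_⟩
  · exact fun i j hij => hstinj (ι.injective hij)
  · have hcomp : (algebraMap ℚ ℂ) = (ι : K →+* ℂ).comp (algebraMap ℚ K) := by
      ext1 x
      simp
    rw [hcomp, ← Polynomial.map_map, ← hFK, hprodK]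
    rw [Polynomial.map_prod]
    refine Finset.prod_congr rfl fun i _ => ?_
    rw [Polynomial.map_sub, map_X, map_C]
    rfl
  · intro he0
    have hEt0 : Et ≠ 0 := by
      rw [hEt]
      apply Finset.prod_ne_zero_iff.mpr
      intro i _
      apply Finset.prod_ne_zero_iff.mpr
      intro j hj
      rw [sub_ne_zero]
      intro hc
      exact (Finset.mem_erase.mp hj).1 (hstinj hc.symm)
    rw [he0, map_zero] at he
    exact hEt0 he.symm
  · have : (algebraMap ℚ ℂ) e = ι (algebraMap ℚ K e) := by simp [ι.commutes]
    rw [show ((e : ℂ)) = algebraMap ℚ ℂ e from rfl, this, he, hEt, map_prod]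
    refine Finset.prod_congr rfl fun i _ => ?_
    rw [map_prod]
    refine Finset.prod_congr rfl fun j _ => ?_
    rw [map_sub]

lemma erase_sum_left {m : ℕ} (i : Fin m) :
    (univ : Finset (Fin m ⊕ Fin m)).erase (Sum.inl i)
      = ((univ.erase i).map ⟨Sum.inl, Sum.inl_injective⟩) ∪
        (univ.map ⟨Sum.inr, Sum.inr_injective⟩) := by
  ext x
  cases x <;> simp

lemma erase_sum_right {m : ℕ} (i : Fin m) :
    (univ : Finset (Fin m ⊕ Fin m)).erase (Sum.inr i)
      = (univ.map ⟨Sum.inl, Sum.inl_injective⟩) ∪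
        ((univ.erase i).map ⟨Sum.inr, Sum.inr_injective⟩) := by
  ext x
  cases x <;> simp

lemma prod_erase_sum_left {m : ℕ} (f : Fin m ⊕ Fin m → ℂ) (i : Fin m) :
    ∏ y ∈ univ.erase (Sum.inl i), f y
      = (∏ j ∈ univ.erase i, f (Sum.inl j)) * ∏ j, f (Sum.inr j) := by
  rw [erase_sum_left, Finset.prod_union, Finset.prod_map, Finset.prod_map]
  · rfl
  · rw [Finset.disjoint_left]
    rintro x hx hy
    simp only [Finset.mem_map, Function.Embedding.coeFn_mk] at hx hy
    obtain ⟨u, _, rfl⟩ := hx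
    obtain ⟨v, _, h⟩ := hy
    exact Sum.inr_ne_inl h

lemma prod_erase_sum_right {m : ℕ} (f : Fin m ⊕ Fin m → ℂ) (i : Fin m) :
    ∏ y ∈ univ.erase (Sum.inr i), f y
      = (∏ j, f (Sum.inl j)) * ∏ j ∈ univ.erase i, f (Sum.inr j) := by
  rw [erase_sum_right, Finset.prod_union, Finset.prod_map, Finset.prod_map]
  · rfl
  · rw [Finset.disjoint_left]
    rintro x hx hy
    simp only [Finset.mem_map, Function.Embedding.coeFn_mk] at hx hy
    obtain ⟨u, _, rfl⟩ := hx
    obtain ⟨v, _, h⟩ := hy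
    exact Sum.inr_ne_inl h

lemma double_prod_reindex {α β : Type*} [Fintype α] [Fintype β] [DecidableEq α] [DecidableEq β]
    (ε : α ≃ β) (f : β → β → ℂ) :
    ∏ x, ∏ y ∈ univ.erase x, f x y = ∏ x : α, ∏ y ∈ univ.erase x, f (ε x) (ε y) := by
  classical
  rw [← Equiv.prod_comp ε (fun x => ∏ y ∈ univ.erase x, f x y)]
  refine Finset.prod_congr rfl fun x _ => ?_
  refine (Finset.prod_nbij ε ?_ ?_ ?_ (fun y _ => rfl)).symm
  · intro y hy
    simp only [mem_erase, mem_univ, and_true] at hy ⊢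
    exact fun h => hy (ε.injective h)
  · intro u _ v _ huv; exact ε.injective huv
  · intro y hy
    refine ⟨ε.symm y, ?_, by simp⟩
    simp only [coe_erase, Set.mem_diff, Finset.coe_univ, Set.mem_univ, true_and,
      Set.mem_singleton_iff, mem_coe, mem_erase, mem_univ, and_true] at hy ⊢
    intro h
    apply hy
    rw [← h]; simp

lemma filter_ne_eq_union (n : ℕ) :
    (univ : Finset (Fin n × Fin n)).filter (fun p => p.1 ≠ p.2)
      = univ.filter (fun p : Fin n × Fin n => p.1 < p.2)
        ∪ univ.filter (fun p : Fin n × Fin n => p.2 < p.1) := by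
  rw [← Finset.filter_or]
  refine Finset.filter_congr fun p _ => ?_
  constructor
  · exact fun h => lt_or_gt_of_ne h
  · rintro (h | h)
    · exact ne_of_lt h
    · exact (ne_of_lt h).symm

lemma disjoint_ltgt (n : ℕ) :
    Disjoint (univ.filter (fun p : Fin n × Fin n => p.1 < p.2))
      (univ.filter (fun p : Fin n × Fin n => p.2 < p.1)) := by
  rw [Finset.disjoint_left]
  intro p hp hq
  rw [Finset.mem_filter] at hp hq
  exact absurd hq.2 (not_lt_of_gt hp.2)

lemma card_ltgt (n : ℕ) :
    (univ.filter (fun p : Fin n × Fin n => p.1 < p.2)).card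
      = (univ.filter (fun p : Fin n × Fin n => p.2 < p.1)).card := by
  apply Finset.card_nbij (fun p => (p.2, p.1))
  · intro p hp
    rw [Finset.mem_coe, Finset.mem_filter] at hp ⊢
    exact ⟨mem_univ _, hp.2⟩
  · intro p _ q _ h
    have h1 : p.2 = q.2 := congrArg Prod.fst h
    have h2 : p.1 = q.1 := congrArg Prod.snd h
    exact Prod.ext h2 h1
  · intro p hp
    refine ⟨(p.2, p.1), ?_, rfl⟩
    simp only [Finset.coe_filter, Set.mem_setOf_eq, mem_univ, true_and] at hp ⊢
    exact hp

lemma two_mul_card_lt (n : ℕ) :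
    2 * (univ.filter (fun p : Fin n × Fin n => p.1 < p.2)).card = n * n - n := by
  have h1 := filter_ne_eq_union n
  have h2 := Finset.card_union_of_disjoint (disjoint_ltgt n)
  have h3 : ((univ : Finset (Fin n × Fin n)).filter (fun p => p.1 ≠ p.2)).card = n * n - n := by
    have : (univ : Finset (Fin n × Fin n)).filter (fun p => p.1 ≠ p.2)
        = (univ : Finset (Fin n)).offDiag := by
      ext p
      simp [Finset.mem_offDiag]
    rw [this, Finset.offDiag_card]
    simp
  rw [h1, h2, ← card_ltgt n] at h3
  omega

lemma prod_pairs_lt_eq (n : ℕ) (r : Fin n → ℂ) :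
    ∏ p ∈ univ.filter (fun p : Fin n × Fin n => p.1 < p.2), (r p.1 - r p.2)^2
      = (-1 : ℂ)^((univ.filter (fun p : Fin n × Fin n => p.1 < p.2)).card)
        * ∏ p ∈ univ.filter (fun p : Fin n × Fin n => p.1 ≠ p.2), (r p.1 - r p.2) := by
  classical
  rw [filter_ne_eq_union, Finset.prod_union (disjoint_ltgt n)]
  have hswap : ∏ p ∈ univ.filter (fun p : Fin n × Fin n => p.2 < p.1), (r p.1 - r p.2)
      = ∏ p ∈ univ.filter (fun p : Fin n × Fin n => p.1 < p.2), (r p.2 - r p.1) := by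
    refine (Finset.prod_nbij (fun p : Fin n × Fin n => (p.2, p.1)) ?_ ?_ ?_ (fun p _ => rfl)).symm
    · intro p hp
      rw [Finset.mem_filter] at hp ⊢
      exact ⟨mem_univ _, hp.2⟩
    · intro p _ q _ h
      exact Prod.ext (congrArg Prod.snd h) (congrArg Prod.fst h)
    · intro p hp
      refine ⟨(p.2, p.1), ?_, rfl⟩
      simp only [Finset.coe_filter, Set.mem_setOf_eq, mem_univ, true_and] at hp ⊢
      exact hp
  have hneg : ∏ p ∈ univ.filter (fun p : Fin n × Fin n => p.1 < p.2), (r p.2 - r p.1)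
      = (-1 : ℂ)^((univ.filter (fun p : Fin n × Fin n => p.1 < p.2)).card)
        * ∏ p ∈ univ.filter (fun p : Fin n × Fin n => p.1 < p.2), (r p.1 - r p.2) := by
    rw [← Finset.prod_const, ← Finset.prod_mul_distrib]
    refine Finset.prod_congr rfl fun p _ => ?_
    ring
  rw [hswap, hneg, Finset.prod_pow]
  set N := (univ.filter (fun p : Fin n × Fin n => p.1 < p.2)).card with hN
  set A := ∏ p ∈ univ.filter (fun p : Fin n × Fin n => p.1 < p.2), (r p.1 - r p.2) with hA
  have h1 : ((-1 : ℂ)^N) * ((-1 : ℂ)^N) = 1 := by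
    rw [← pow_add]
    exact Even.neg_one_pow ⟨N, rfl⟩
  calc A ^ 2 = (((-1 : ℂ)^N) * ((-1 : ℂ)^N)) * (A * A) := by rw [h1]; ring
    _ = (-1 : ℂ)^N * (A * ((-1 : ℂ)^N * A)) := by ring

lemma prod_ne_eq_double (n : ℕ) (r : Fin n → ℂ) :
    ∏ p ∈ univ.filter (fun p : Fin n × Fin n => p.1 ≠ p.2), (r p.1 - r p.2)
      = ∏ x, ∏ y ∈ univ.erase x, (r x - r y) := by
  classical
  rw [Finset.prod_filter]
  rw [Fintype.prod_prod_type]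
  refine Finset.prod_congr rfl fun x _ => ?_
  rw [← Finset.prod_filter, Finset.filter_ne]

lemma key_product (m n : ℕ) (hn : n = m + m) (hm : 0 < m) (s : Fin m → ℂ)
    (hsinj : Function.Injective s) (w : ℂ) (hw : w ≠ 0) (hprod : ∏ i, s i = w^2) :
    ∃ r : Fin n → ℂ, Function.Injective r ∧
      ∏ k, ((X : ℂ[X]) - C (r k)) = ∏ i, ((X : ℂ[X])^2 - C (s i)) ∧
      ∏ p ∈ univ.filter (fun p : Fin n × Fin n => p.1 < p.2), (r p.1 - r p.2)^2
        = 4^m * w^2 * (∏ i, ∏ j ∈ univ.erase i, (s i - s j))^2 := by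
  classical
  have hs0 : ∀ i, s i ≠ 0 := by
    intro i hi
    have : ∏ i, s i ≠ 0 := by
      rw [hprod]; exact pow_ne_zero 2 hw
    exact this (Finset.prod_eq_zero (mem_univ i) hi)
  choose ρ hρ using fun i => IsAlgClosed.exists_pow_nat_eq (k := ℂ) (s i) (n := 2) (by norm_num)
  have hρ0 : ∀ i, ρ i ≠ 0 := by
    intro i hi
    exact hs0 i (by rw [← hρ i, hi]; ring)
  set r0 : Fin m ⊕ Fin m → ℂ := Sum.elim ρ (fun i => -ρ i) with hr0
  set ε : Fin m ⊕ Fin m ≃ Fin n := finSumFinEquiv.trans (finCongr hn.symm) with hε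
  set r : Fin n → ℂ := fun k => r0 (ε.symm k) with hr
  have hrε : ∀ x, r (ε x) = r0 x := by
    intro x; rw [hr]; simp
  have hρinj : Function.Injective ρ := by
    intro i j hij
    apply hsinj
    rw [← hρ i, ← hρ j, hij]
  have hr0inj : Function.Injective r0 := by
    rintro (i | i) (j | j) hij <;> simp only [hr0, Sum.elim_inl, Sum.elim_inr] at hij
    · rw [hρinj hij]
    · exfalso
      have : s i = s j := by rw [← hρ i, ← hρ j, hij]; ring
      have hij' : i = j := hsinj this
      subst hij'
      exact hρ0 i (by linear_combination hij / 2)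
    · exfalso
      have : s i = s j := by rw [← hρ i, ← hρ j, ← hij]; ring
      have hij' : i = j := hsinj this
      subst hij'
      exact hρ0 i (by linear_combination - hij / 2)
    · rw [hρinj (neg_inj.mp hij)]
  have hrinj : Function.Injective r := by
    intro x y hxy
    have := hr0inj hxy
    exact ε.symm.injective this
  refine ⟨r, hrinj, ?_, ?_⟩
  · rw [← Equiv.prod_comp ε (fun k => (X : ℂ[X]) - C (r k))]
    have : ∀ x, (X : ℂ[X]) - C (r (ε x)) = X - C (r0 x) := by
      intro x; rw [hrε]
    simp only [this]
    rw [Fintype.prod_sum_type]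
    simp only [hr0, Sum.elim_inl, Sum.elim_inr]
    rw [← Finset.prod_mul_distrib]
    refine Finset.prod_congr rfl fun i _ => ?_
    rw [← hρ i, map_neg, map_pow]
    ring
  · rw [prod_pairs_lt_eq, prod_ne_eq_double]
    set N := (univ.filter (fun p : Fin n × Fin n => p.1 < p.2)).card with hN
    have hNval : 2 * N = n * n - n := two_mul_card_lt n
    -- compute the double product
    have hdouble : ∏ x, ∏ y ∈ univ.erase x, (r x - r y)
        = (-1)^m * 4^m * w^2 * (∏ i, ∏ j ∈ univ.erase i, (s i - s j))^2 := by
      rw [double_prod_reindex ε.symm.symm (fun x y => r x - r y)]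
      simp only [Equiv.symm_symm, hrε]
      rw [Fintype.prod_sum_type]
      have hP1 : ∀ i : Fin m, ∏ y ∈ univ.erase (Sum.inl i), (r0 (Sum.inl i) - r0 y)
          = (2 * ρ i) * ∏ j ∈ univ.erase i, (s i - s j) := by
        intro i
        rw [prod_erase_sum_left]
        simp only [hr0, Sum.elim_inl, Sum.elim_inr]
        rw [← Finset.mul_prod_erase univ (fun j => ρ i - - ρ j) (mem_univ i)]
        rw [mul_left_comm, ← Finset.prod_mul_distrib]
        congr 1
        · ring
        · refine Finset.prod_congr rfl fun j _ => ?_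
          rw [← hρ i, ← hρ j]
          ring
      have hP2 : ∀ i : Fin m, ∏ y ∈ univ.erase (Sum.inr i), (r0 (Sum.inr i) - r0 y)
          = (-2 * ρ i) * ∏ j ∈ univ.erase i, (s i - s j) := by
        intro i
        rw [prod_erase_sum_right]
        simp only [hr0, Sum.elim_inl, Sum.elim_inr]
        rw [← Finset.mul_prod_erase univ (fun j => -ρ i - ρ j) (mem_univ i)]
        rw [mul_assoc, ← Finset.prod_mul_distrib]
        congr 1
        · ring
        · refine Finset.prod_congr rfl fun j _ => ?_
          rw [← hρ i, ← hρ j]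
          ring
      simp only [hP1, hP2]
      rw [← Finset.prod_mul_distrib]
      have : ∀ i : Fin m, (2 * ρ i) * (∏ j ∈ univ.erase i, (s i - s j))
          * ((-2 * ρ i) * ∏ j ∈ univ.erase i, (s i - s j))
          = (-4 * s i) * (∏ j ∈ univ.erase i, (s i - s j))^2 := by
        intro i
        rw [← hρ i]
        ring
      simp only [this]
      rw [Finset.prod_mul_distrib, Finset.prod_mul_distrib, Finset.prod_const,
        Finset.prod_pow, hprod, Finset.card_univ, Fintype.card_fin,
        show (-4 : ℂ) = (-1) * 4 from by norm_num, mul_pow]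
    rw [hdouble]
    have hNm : Even (N + m) := by
      have h4 : (m + m) * (m + m) = 4 * (m * m) := by ring
      rw [hn, h4] at hNval
      have hmm : m ≤ m * m := Nat.le_mul_of_pos_left m hm
      exact ⟨m * m, by omega⟩
    have hsign : (-1 : ℂ)^N * (-1 : ℂ)^m = 1 := by
      rw [← pow_add]
      exact Even.neg_one_pow hNm
    calc (-1 : ℂ)^N * ((-1)^m * 4^m * w^2 * (∏ i, ∏ j ∈ univ.erase i, (s i - s j))^2)
        = ((-1 : ℂ)^N * (-1 : ℂ)^m) * (4^m * w^2 * (∏ i, ∏ j ∈ univ.erase i, (s i - s j))^2) := by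
          ring
      _ = 4^m * w^2 * (∏ i, ∏ j ∈ univ.erase i, (s i - s j))^2 := by
          rw [hsign, one_mul]

lemma myg_coeff_abs (m : ℕ) (hm : 0 < m) (a : Fin m → ℤ) (t : ℤ)
    (ha0 : a ⟨0, hm⟩ = 0) (L : ℝ) (hL : 1 ≤ L)
    (hab : ∀ i, |(a i : ℝ)| ≤ L) (ht2 : (t : ℝ)^2 ≤ L) (j : ℕ) :
    |(((myg m a t).coeff j : ℤ) : ℝ)| ≤ L := by
  rcases lt_trichotomy j m with hj | hj | hj
  · rcases Nat.eq_zero_or_pos j with hj0 | hj0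
    · subst hj0
      rw [myg_coeff_zero m a t hm ha0]
      push_cast
      rw [abs_mul, abs_pow, abs_neg, abs_one, one_pow, one_mul, abs_pow]
      calc |(t:ℝ)|^2 = (t:ℝ)^2 := sq_abs _
        _ ≤ L := ht2
    · rw [myg_coeff_mid m a t j hj0 hj]
      exact hab _
  · rw [hj]
    have : (myg m a t).coeff m = 1 := by
      have h1 := (myg_monic m a t hm)
      have h2 := myg_natDegree m a t hm
      rw [Polynomial.Monic, Polynomial.leadingCoeff, h2] at h1
      exact h1
    rw [this]
    simpa using hL
  · rw [Polynomial.coeff_eq_zero_of_natDegree_lt (by rw [myg_natDegree m a t hm]; exact hj)]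
    simpa using le_trans zero_le_one hL

lemma expand_mem_set (m n : ℕ) (hn : n = m + m) (hm3 : 3 ≤ m) (L : ℝ) (hL : 1 ≤ L)
    (a : Fin m → ℤ) (ha0 : a ⟨0, by omega⟩ = 0) (hab : ∀ i, |(a i : ℝ)| ≤ L)
    (t : ℤ) (ht1 : 1 ≤ t) (ht2 : (t : ℝ)^2 ≤ L)
    (hsep : ((myg m a t).map (Int.castRingHom ℂ)).Separable) :
    (expand ℤ 2 (myg m a t)) ∈ {f : ℤ[X] | f.Monic ∧ f.natDegree = n ∧
        (∀ i, |(f.coeff i : ℝ)| ≤ L) ∧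
        ∃ r : Fin n → ℂ, Function.Injective r ∧
          f.map (algebraMap ℤ ℂ) = ∏ i, (X - C (r i)) ∧
          ∃ q : ℚ, q ≠ 0 ∧
            (∏ p ∈ Finset.univ.filter (fun p : Fin n × Fin n => p.1 < p.2),
              (r p.1 - r p.2) ^ 2) = (q : ℂ) ^ 2} := by
  classical
  have hm : 0 < m := by omega
  set g := myg m a t with hg
  have hgmo : g.Monic := myg_monic m a t hm
  have hgdeg : g.natDegree = m := myg_natDegree m a t hm
  -- the ℚ version
  set gQ : ℚ[X] := g.map (Int.castRingHom ℚ) with hgQ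
  have hgQmo : gQ.Monic := hgmo.map _
  have hgQdeg : gQ.natDegree = m := by rw [hgQ, hgmo.natDegree_map, hgdeg]
  have hmapmap : gQ.map (algebraMap ℚ ℂ) = g.map (Int.castRingHom ℂ) := by
    rw [hgQ, Polynomial.map_map,
      show (algebraMap ℚ ℂ).comp (Int.castRingHom ℚ) = Int.castRingHom ℂ from
        RingHom.ext_int _ _]
  have hgQsep : gQ.Separable := by
    rw [← Polynomial.separable_map (algebraMap ℚ ℂ), hmapmap]
    exact hsep
  obtain ⟨s, e, hsinj, hsprod, he0, heval⟩ := exists_enum_roots m hm gQ hgQmo hgQdeg hgQsep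
  -- ∏ s i = t^2
  have hprods : ∏ i, s i = ((t : ℂ))^2 := by
    have h1 : (gQ.map (algebraMap ℚ ℂ)).eval 0 = ((-1)^m * (t:ℂ)^2) := by
      rw [hmapmap, eval_map, eval₂_at_zero]
      rw [hg, myg_coeff_zero m a t hm ha0]
      simp only [eq_intCast]
      push_cast
      ring
    have h2 : (gQ.map (algebraMap ℚ ℂ)).eval 0 = (-1)^m * ∏ i, s i := by
      rw [hsprod, Polynomial.eval_prod]
      have hev : ∀ i ∈ (univ : Finset (Fin m)), ((X : ℂ[X]) - C (s i)).eval 0 = (-1) * s i := by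
        intro i _; simp
      rw [Finset.prod_congr rfl hev, Finset.prod_mul_distrib, Finset.prod_const,
        Finset.card_univ, Fintype.card_fin]
    rw [h1] at h2
    have hne : ((-1 : ℂ))^m ≠ 0 := pow_ne_zero _ (by norm_num)
    exact (mul_left_cancel₀ hne h2).symm
  have htne : ((t : ℂ)) ≠ 0 := Int.cast_ne_zero.mpr (by omega)
  obtain ⟨r, hrinj, hrprod, hrpairs⟩ :=
    key_product m n hn hm s hsinj ((t : ℂ)) htne hprods
  refine ⟨?_, ?_, ?_, r, hrinj, ?_, ?_⟩
  · exact hgmo.expand (by norm_num)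
  · rw [natDegree_expand, hgdeg]; omega
  · intro i
    rw [Polynomial.coeff_expand (by norm_num : 0 < 2)]
    split
    · exact myg_coeff_abs m hm a t ha0 L hL hab ht2 _
    · simpa using le_trans zero_le_one hL
  · have hstep : (expand ℤ 2 g).map (algebraMap ℤ ℂ) = expand ℂ 2 (g.map (Int.castRingHom ℂ)) := by
      rw [Polynomial.map_expand]
      rfl
    rw [hstep, ← hmapmap, hsprod, map_prod]
    rw [hrprod]
    refine Finset.prod_congr rfl fun i _ => ?_
    rw [map_sub, Polynomial.expand_X, Polynomial.expand_C]
  · refine ⟨2^m * (t : ℚ) * e, ?_, ?_⟩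
    · exact mul_ne_zero (mul_ne_zero (pow_ne_zero _ two_ne_zero)
        (Int.cast_ne_zero.mpr (by omega))) he0
    · rw [hrpairs, ← heval]
      push_cast
      rw [show ((4:ℂ))^m = ((2:ℂ)^2)^m from by norm_num, ← pow_mul]
      ring

lemma myh_monic (m : ℕ) (a : Fin m → ℤ) (hm : 0 < m) : (myh m a).Monic :=
  monic_X_pow_add (myS_degree_lt m a hm)

lemma myh_natDegree (m : ℕ) (a : Fin m → ℤ) (hm : 0 < m) : (myh m a).natDegree = m := by
  rw [myh, natDegree_eq_of_degree_eq_some]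
  rw [degree_add_eq_left_of_degree_lt]
  · exact degree_X_pow m
  · rw [degree_X_pow]; exact myS_degree_lt m a hm

lemma not_separable_root (m : ℕ) (hm : 0 < m) (a : Fin m → ℤ) (t : ℤ)
    (hns : ¬ ((myg m a t).map (Int.castRingHom ℂ)).Separable) :
    ∃ z ∈ (derivative ((myh m a).map (Int.castRingHom ℂ))).roots.toFinset,
      ((-1 : ℂ))^m * (t : ℂ)^2 = - ((myh m a).map (Int.castRingHom ℂ)).eval z := by
  classical
  set H : ℂ[X] := (myh m a).map (Int.castRingHom ℂ) with hH
  set G : ℂ[X] := (myg m a t).map (Int.castRingHom ℂ) with hG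
  have hGeq : G = H + C ((-1 : ℂ)^m * (t : ℂ)^2) := by
    rw [hG, hH, myg, Polynomial.map_add, Polynomial.map_C]
    congr 1
    simp only [eq_intCast]
    push_cast
    ring
  have hder : derivative G = derivative H := by
    rw [hGeq, derivative_add, derivative_C, add_zero]
  rw [Polynomial.separable_def] at hns
  set d : ℂ[X] := EuclideanDomain.gcd G (derivative G) with hd
  have hdunit : ¬ IsUnit d := fun h => hns (EuclideanDomain.gcd_isUnit_iff.mp h)
  have hGne : G ≠ 0 := ((myg_monic m a t hm).map _).ne_zero
  have hdne : d ≠ 0 := by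
    intro h
    rw [hd] at h
    exact hGne (EuclideanDomain.gcd_eq_zero_iff.mp h).1
  have hddeg : 0 < d.degree := by
    rcases lt_or_ge 0 d.degree with h | h
    · exact h
    · exfalso
      have : d.degree = 0 := le_antisymm h (zero_le_degree_iff.mpr hdne)
      exact hdunit (isUnit_iff_degree_eq_zero.mpr this)
  obtain ⟨z, hz⟩ := Complex.exists_root hddeg
  have hzG : G.eval z = 0 :=
    eval_eq_zero_of_dvd_of_eval_eq_zero (EuclideanDomain.gcd_dvd_left _ _) hz
  have hzG' : (derivative G).eval z = 0 :=
    eval_eq_zero_of_dvd_of_eval_eq_zero (EuclideanDomain.gcd_dvd_right _ _) hz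
  refine ⟨z, ?_, ?_⟩
  · rw [Multiset.mem_toFinset, mem_roots']
    · constructor
      · -- derivative H ≠ 0
        intro hzero
        have hc := congrArg (fun p => Polynomial.coeff p (m - 1)) hzero
        simp only [coeff_zero] at hc
        rw [Polynomial.coeff_derivative] at hc
        have hcm : H.coeff (m - 1 + 1) = 1 := by
          have : m - 1 + 1 = m := by omega
          rw [this, hH, Polynomial.coeff_map]
          have h1 := myh_monic m a hm
          rw [Polynomial.Monic, Polynomial.leadingCoeff, myh_natDegree m a hm] at h1
          rw [h1]
          simp
        rw [hcm, one_mul] at hc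
        have hmm : (m - 1) + 1 = m := Nat.succ_pred_eq_of_pos hm
        have hcast : ((m - 1 : ℕ) : ℂ) + 1 = (m : ℂ) := by exact_mod_cast congrArg (Nat.cast : ℕ → ℂ) hmm
        rw [hcast] at hc
        exact (Nat.cast_ne_zero.mpr (by omega : m ≠ 0)) hc
      · rw [IsRoot, ← hder]
        exact hzG'
  · have := hzG
    rw [hGeq] at this
    simp only [eval_add, eval_C] at this
    linear_combination this

open scoped Classical in
lemma bad_t_card (m : ℕ) (hm : 0 < m) (a : Fin m → ℤ) (B : ℤ) :
    ((Finset.Icc (1:ℤ) B).filter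
      (fun t => ¬ ((myg m a t).map (Int.castRingHom ℂ)).Separable)).card ≤ m := by
  classical
  set H : ℂ[X] := (myh m a).map (Int.castRingHom ℂ) with hH
  set R := (derivative H).roots.toFinset with hR
  set bad := (Finset.Icc (1:ℤ) B).filter
      (fun t => ¬ ((myg m a t).map (Int.castRingHom ℂ)).Separable) with hbad
  have hchoice : ∀ t ∈ bad, ∃ z ∈ R, ((-1 : ℂ))^m * (t : ℂ)^2 = - H.eval z := by
    intro t ht
    rw [hbad, Finset.mem_filter] at ht
    exact not_separable_root m hm a t ht.2
  choose! z hz1 hz2 using hchoice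
  have hcard : bad.card ≤ R.card := by
    apply Finset.card_le_card_of_injOn z (fun t ht => hz1 t ht)
    intro t1 ht1 t2 ht2 hz
    simp only [Finset.mem_coe] at ht1 ht2
    have e1 := hz2 t1 ht1
    have e2 := hz2 t2 ht2
    rw [hz] at e1
    have hsq : ((t1 : ℂ))^2 = ((t2 : ℂ))^2 := by
      have h3 := e1.trans e2.symm
      have hne : ((-1 : ℂ))^m ≠ 0 := pow_ne_zero _ (by norm_num)
      exact mul_left_cancel₀ hne h3
    have hsqz : t1^2 = t2^2 := by exact_mod_cast hsq
    have ht1' : 1 ≤ t1 := (Finset.mem_Icc.mp (Finset.mem_filter.mp ht1).1).1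
    have ht2' : 1 ≤ t2 := (Finset.mem_Icc.mp (Finset.mem_filter.mp ht2).1).1
    have h4 : (t1 - t2) * (t1 + t2) = 0 := by linear_combination hsqz
    rcases mul_eq_zero.mp h4 with h5 | h5
    · omega
    · omega
  apply le_trans hcard
  apply le_trans (Multiset.toFinset_card_le _)
  apply le_trans (Polynomial.card_roots' _)
  apply le_trans (Polynomial.natDegree_derivative_le _)
  have : H.natDegree = m := by
    rw [hH, (myh_monic m a hm).natDegree_map, myh_natDegree m a hm]
  omega

lemma finite_bounded (n : ℕ) (L : ℝ) :
    {f : ℤ[X] | f.natDegree = n ∧ ∀ i, |((f.coeff i : ℤ) : ℝ)| ≤ L}.Finite := by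
  classical
  set cand : Finset ℤ[X] := (Fintype.piFinset (fun _ : Fin (n+1) => Finset.Icc (-⌈L⌉) ⌈L⌉)).image
      (fun v => ∑ i : Fin (n+1), C (v i) * X^(i:ℕ)) with hcand
  apply Set.Finite.subset (cand : Set ℤ[X]).toFinite
  rintro f ⟨hdeg, hb⟩
  simp only [hcand, Finset.coe_image, Set.mem_image, Finset.mem_coe, Fintype.mem_piFinset]
  refine ⟨fun i => f.coeff i, ?_, ?_⟩
  · intro i
    rw [Finset.mem_Icc]
    have h := hb i
    rw [abs_le] at h
    constructor
    · have h1 : (-⌈L⌉ : ℝ) ≤ (f.coeff i : ℝ) := by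
        calc (-⌈L⌉ : ℝ) ≤ -L := by simp [Int.le_ceil]
          _ ≤ (f.coeff i : ℝ) := h.1
      exact_mod_cast h1
    · have h1 : ((f.coeff i : ℤ) : ℝ) ≤ ⌈L⌉ := le_trans h.2 (Int.le_ceil L)
      exact_mod_cast h1
  · have h1 := f.as_sum_range_C_mul_X_pow
    rw [Fin.sum_univ_eq_sum_range (fun i => C (f.coeff i) * X^i) (n+1)]
    rw [hdeg] at h1
    exact h1.symm

theorem disc_square_lower_bound (n : ℕ) (hn : 6 ≤ n) (heven : Even n) :
    ∃ c > (0 : ℝ), ∃ L₀ : ℝ, 1 ≤ L₀ ∧ ∀ L : ℝ, L₀ ≤ L →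
      c * L ^ (((n : ℝ) - 1) / 2) ≤
        ({f : ℤ[X] | f.Monic ∧ f.natDegree = n ∧ (∀ i, |(f.coeff i : ℝ)| ≤ L) ∧
            ∃ r : Fin n → ℂ, Function.Injective r ∧
              f.map (algebraMap ℤ ℂ) = ∏ i, (X - C (r i)) ∧
              ∃ q : ℚ, q ≠ 0 ∧
                (∏ p ∈ Finset.univ.filter (fun p : Fin n × Fin n => p.1 < p.2),
                  (r p.1 - r p.2) ^ 2) = (q : ℂ) ^ 2}.ncard : ℝ) := by
  classical
  obtain ⟨m, hnm⟩ := heven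
  have hm3 : 3 ≤ m := by omega
  have hm : 0 < m := by omega
  refine ⟨1/2, by norm_num, ((2*m+2 : ℝ))^2, ?_, ?_⟩
  · nlinarith [Nat.cast_nonneg (α := ℝ) m]
  intro L hL
  have hmcast : (1 : ℝ) ≤ (m : ℝ) := by exact_mod_cast hm
  have hL1 : 1 ≤ L := le_trans (by nlinarith) hL
  have hL0 : 0 < L := lt_of_lt_of_le zero_lt_one hL1
  set S := {f : ℤ[X] | f.Monic ∧ f.natDegree = n ∧ (∀ i, |(f.coeff i : ℝ)| ≤ L) ∧
            ∃ r : Fin n → ℂ, Function.Injective r ∧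
              f.map (algebraMap ℤ ℂ) = ∏ i, (X - C (r i)) ∧
              ∃ q : ℚ, q ≠ 0 ∧
                (∏ p ∈ Finset.univ.filter (fun p : Fin n × Fin n => p.1 < p.2),
                  (r p.1 - r p.2) ^ 2) = (q : ℂ) ^ 2} with hSdef
  set i0 : Fin m := ⟨0, hm⟩ with hi0
  set K : Finset ℤ := Finset.Icc (-⌊L⌋) ⌊L⌋ with hK
  set A := Fintype.piFinset (fun i : Fin m => if i = i0 then ({0} : Finset ℤ) else K) with hA
  set T := Finset.Icc (1:ℤ) ⌊Real.sqrt L⌋ with hT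
  set Good := (A ×ˢ T).filter
      (fun p => ((myg m p.1 p.2).map (Int.castRingHom ℂ)).Separable) with hGood
  -- membership facts
  have hAmem : ∀ a ∈ A, a i0 = 0 ∧ ∀ i, |(a i : ℝ)| ≤ L := by
    intro a ha
    rw [hA, Fintype.mem_piFinset] at ha
    have h0 : a i0 = 0 := by
      have := ha i0
      rw [if_pos rfl] at this
      exact Finset.mem_singleton.mp this
    refine ⟨h0, fun i => ?_⟩
    by_cases hi : i = i0
    · rw [hi, h0]
      simp
      linarith
    · have := ha i
      rw [if_neg hi, hK, Finset.mem_Icc] at this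
      rw [abs_le]
      constructor
      · calc (-L : ℝ) ≤ -⌊L⌋ := by
              simp only [neg_le_neg_iff]
              exact le_trans (Int.floor_le L) (le_refl _)
          _ ≤ (a i : ℝ) := by exact_mod_cast this.1
      · calc ((a i : ℤ) : ℝ) ≤ (⌊L⌋ : ℝ) := by exact_mod_cast this.2
          _ ≤ L := Int.floor_le L
  have hTmem : ∀ t ∈ T, 1 ≤ t ∧ ((t:ℝ))^2 ≤ L := by
    intro t ht
    rw [hT, Finset.mem_Icc] at ht
    refine ⟨ht.1, ?_⟩
    have h1 : ((t:ℤ):ℝ) ≤ Real.sqrt L := by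
      calc ((t:ℤ):ℝ) ≤ (⌊Real.sqrt L⌋ : ℝ) := by exact_mod_cast ht.2
        _ ≤ Real.sqrt L := Int.floor_le _
    have h2 : (0:ℝ) ≤ (t:ℝ) := by
      have : (1:ℝ) ≤ (t:ℝ) := by exact_mod_cast ht.1
      linarith
    calc ((t:ℝ))^2 ≤ (Real.sqrt L)^2 := by nlinarith
      _ = L := Real.sq_sqrt (le_of_lt hL0)
  -- image in S
  have himg : ∀ p ∈ Good, expand ℤ 2 (myg m p.1 p.2) ∈ S := by
    intro p hp
    rw [hGood, Finset.mem_filter, Finset.mem_product] at hp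
    obtain ⟨⟨hpA, hpT⟩, hsep⟩ := hp
    have h0 := (hAmem p.1 hpA).1
    have hb := (hAmem p.1 hpA).2
    have ht := hTmem p.2 hpT
    exact expand_mem_set m n hnm hm3 L hL1 p.1 h0 hb p.2 ht.1 ht.2 hsep
  -- injectivity
  have hinjphi : Set.InjOn (fun p : (Fin m → ℤ) × ℤ => expand ℤ 2 (myg m p.1 p.2)) ↑Good := by
    intro p hp q hq hpq
    simp only [Finset.mem_coe, hGood, Finset.mem_filter, Finset.mem_product] at hp hq
    have hgg : myg m p.1 p.2 = myg m q.1 q.2 := Polynomial.expand_injective (by norm_num) hpq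
    have ht1 : 1 ≤ p.2 := (hTmem p.2 hp.1.2).1
    have ht2 : 1 ≤ q.2 := (hTmem q.2 hq.1.2).1
    have ha01 : p.1 i0 = 0 := (hAmem p.1 hp.1.1).1
    have ha02 : q.1 i0 = 0 := (hAmem q.1 hq.1.1).1
    have hc0 : (-1:ℤ)^m * p.2^2 = (-1)^m * q.2^2 := by
      have h1 := congrArg (fun f => Polynomial.coeff f 0) hgg
      simpa only [myg_coeff_zero m p.1 p.2 hm ha01, myg_coeff_zero m q.1 q.2 hm ha02] using h1
    have hteq : p.2 = q.2 := by
      have h2 : p.2^2 = q.2^2 := by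
        have hne : ((-1:ℤ))^m ≠ 0 := pow_ne_zero _ (by norm_num)
        exact mul_left_cancel₀ hne hc0
      have h4 : (p.2 - q.2) * (p.2 + q.2) = 0 := by linear_combination h2
      rcases mul_eq_zero.mp h4 with h5 | h5
      · omega
      · omega
    have haeq : p.1 = q.1 := by
      funext i
      by_cases hi : i = i0
      · rw [hi, ha01, ha02]
      · have hival : 0 < (i : ℕ) := by
          rcases Nat.eq_zero_or_pos (i : ℕ) with h | h
          · exfalso; exact hi (Fin.ext (by simpa using h))
          · exact h
        have h1 := congrArg (fun f => Polynomial.coeff f (i : ℕ)) hgg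
        simp only [myg_coeff_mid m p.1 p.2 (i : ℕ) hival i.isLt,
          myg_coeff_mid m q.1 q.2 (i : ℕ) hival i.isLt] at h1
        simpa using h1
    exact Prod.ext haeq hteq
  -- S finite
  have hSfin : S.Finite := by
    apply Set.Finite.subset (finite_bounded n L)
    rintro f ⟨_, hdeg, hb, _⟩
    exact ⟨hdeg, hb⟩
  -- card chain
  have hcount : (Good.card : ℝ) ≤ (S.ncard : ℝ) := by
    have h1 : ((fun p : (Fin m → ℤ) × ℤ => expand ℤ 2 (myg m p.1 p.2)) '' ↑Good).ncard
        = Good.card := by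
      rw [Set.ncard_image_of_injOn hinjphi, Set.ncard_coe_finset]
    have h2 : ((fun p : (Fin m → ℤ) × ℤ => expand ℤ 2 (myg m p.1 p.2)) '' ↑Good) ⊆ S := by
      rintro f ⟨p, hp, rfl⟩
      exact himg p (Finset.mem_coe.mp hp)
    have h3 := Set.ncard_le_ncard h2 hSfin
    rw [h1] at h3
    exact_mod_cast h3
  -- lower bound on Good.card
  have hKcard : (L : ℝ) ≤ (K.card : ℝ) := by
    rw [hK, Int.card_Icc]
    have h1 : (0:ℤ) ≤ ⌊L⌋ := Int.floor_nonneg.mpr (le_of_lt hL0)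
    have h2 : (⌊L⌋ + 1 - (-⌊L⌋)) = 2*⌊L⌋ + 1 := by ring
    rw [h2]
    have h3 : ((2*⌊L⌋ + 1).toNat : ℝ) = ((2*⌊L⌋ + 1 : ℤ) : ℝ) := by
      exact_mod_cast congrArg (fun z : ℤ => (z : ℝ))
        (Int.toNat_of_nonneg (by omega : (0:ℤ) ≤ 2*⌊L⌋+1))
    rw [h3]
    push_cast
    have := Int.lt_floor_add_one L
    linarith
  have hAcard : A.card = K.card ^ (m - 1) := by
    rw [hA, Fintype.card_piFinset]
    rw [← Finset.mul_prod_erase Finset.univ _ (Finset.mem_univ i0)]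
    rw [if_pos rfl, Finset.card_singleton, one_mul]
    rw [Finset.prod_congr rfl (fun i hi => by
      rw [if_neg (Finset.mem_erase.mp hi).1])]
    rw [Finset.prod_const, Finset.card_erase_of_mem (Finset.mem_univ i0), Finset.card_univ,
      Fintype.card_fin]
  have hbadsub : (A ×ˢ T).filter
      (fun p => ¬ ((myg m p.1 p.2).map (Int.castRingHom ℂ)).Separable)
      ⊆ A.biUnion (fun a => ({a} : Finset (Fin m → ℤ)) ×ˢ
        (T.filter (fun t => ¬ ((myg m a t).map (Int.castRingHom ℂ)).Separable))) := by
    intro p hp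
    rw [Finset.mem_filter, Finset.mem_product] at hp
    rw [Finset.mem_biUnion]
    refine ⟨p.1, hp.1.1, ?_⟩
    rw [Finset.mem_product, Finset.mem_singleton, Finset.mem_filter]
    exact ⟨rfl, hp.1.2, hp.2⟩
  have hbadcard : ((A ×ˢ T).filter
      (fun p => ¬ ((myg m p.1 p.2).map (Int.castRingHom ℂ)).Separable)).card
      ≤ A.card * m := by
    apply le_trans (Finset.card_le_card hbadsub)
    apply le_trans (Finset.card_biUnion_le)
    apply le_trans (Finset.sum_le_sum (fun a _ => ?_))
    · rw [Finset.sum_const, smul_eq_mul]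
    · rw [Finset.card_product, Finset.card_singleton, one_mul]
      exact bad_t_card m hm a ⌊Real.sqrt L⌋
  have hGoodsplit : Good.card + ((A ×ˢ T).filter
      (fun p => ¬ ((myg m p.1 p.2).map (Int.castRingHom ℂ)).Separable)).card
      = A.card * T.card := by
    rw [hGood, Finset.card_filter_add_card_filter_not, Finset.card_product]
  have hsqrt1 : (1:ℝ) ≤ Real.sqrt L := by
    rw [show (1:ℝ) = Real.sqrt 1 from (Real.sqrt_one).symm]
    exact Real.sqrt_le_sqrt hL1
  have hTcard : Real.sqrt L - 1 ≤ (T.card : ℝ) := by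
    rw [hT, Int.card_Icc]
    have h0 : (0:ℤ) ≤ ⌊Real.sqrt L⌋ := Int.floor_nonneg.mpr (by linarith)
    have h3 : ((⌊Real.sqrt L⌋ + 1 - 1).toNat : ℝ) = ((⌊Real.sqrt L⌋ : ℤ) : ℝ) := by
      rw [show (⌊Real.sqrt L⌋ + 1 - 1) = ⌊Real.sqrt L⌋ by ring]
      exact_mod_cast congrArg (fun z : ℤ => (z : ℝ)) (Int.toNat_of_nonneg h0)
    rw [h3]
    have := Int.lt_floor_add_one (Real.sqrt L)
    have h4 := Int.floor_le (Real.sqrt L)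
    linarith [Int.sub_one_lt_floor (Real.sqrt L)]
  have hsqrtL : 2*(m:ℝ)+2 ≤ Real.sqrt L := by
    have h1 : ((2*(m:ℝ)+2))^2 ≤ L := hL
    have h2 : (0:ℝ) ≤ 2*(m:ℝ)+2 := by positivity
    nlinarith [Real.sq_sqrt (le_of_lt hL0), Real.sqrt_nonneg L]
  have hTm : Real.sqrt L / 2 ≤ (T.card : ℝ) - m := by
    linarith
  have hGoodlb : (A.card : ℝ) * (Real.sqrt L / 2) ≤ (Good.card : ℝ) := by
    have h1 : (Good.card : ℝ) = (A.card : ℝ) * (T.card : ℝ) - ((A ×ˢ T).filter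
        (fun p => ¬ ((myg m p.1 p.2).map (Int.castRingHom ℂ)).Separable)).card := by
      have := hGoodsplit
      have h2 : ((Good.card + ((A ×ˢ T).filter
          (fun p => ¬ ((myg m p.1 p.2).map (Int.castRingHom ℂ)).Separable)).card : ℕ) : ℝ)
          = ((A.card * T.card : ℕ) : ℝ) := by exact_mod_cast congrArg (fun k : ℕ => (k : ℝ)) this
      push_cast at h2
      linarith
    have h3 : (((A ×ˢ T).filter
        (fun p => ¬ ((myg m p.1 p.2).map (Int.castRingHom ℂ)).Separable)).card : ℝ)
        ≤ (A.card : ℝ) * m := by exact_mod_cast hbadcard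
    have h4 : (A.card : ℝ) * ((T.card : ℝ) - m) ≤ (Good.card : ℝ) := by
      rw [h1]
      have := Nat.cast_nonneg (α := ℝ) A.card
      nlinarith
    apply le_trans ?_ h4
    apply mul_le_mul_of_nonneg_left hTm (Nat.cast_nonneg _)
  -- final chain
  have hAlb : (L : ℝ)^(m-1) ≤ (A.card : ℝ) := by
    rw [hAcard]
    push_cast
    exact pow_le_pow_left₀ (le_of_lt hL0) hKcard _
  have hfinal : (1/2 : ℝ) * (L^(m-1) * Real.sqrt L) ≤ (Good.card : ℝ) := by
    have h1 : (L:ℝ)^(m-1) * (Real.sqrt L / 2) ≤ (A.card : ℝ) * (Real.sqrt L / 2) := by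
      apply mul_le_mul_of_nonneg_right hAlb
      positivity
    calc (1/2 : ℝ) * (L^(m-1) * Real.sqrt L) = (L:ℝ)^(m-1) * (Real.sqrt L / 2) := by ring
      _ ≤ (A.card : ℝ) * (Real.sqrt L / 2) := h1
      _ ≤ (Good.card : ℝ) := hGoodlb
  have hrpow : L ^ (((n : ℝ) - 1) / 2) = L^(m-1) * Real.sqrt L := by
    have h1 : ((n : ℝ) - 1) / 2 = ((m - 1 : ℕ) : ℝ) + 1/2 := by
      have : (n : ℝ) = 2*(m:ℝ) := by rw [hnm]; push_cast; ring
      rw [this]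
      have : ((m - 1 : ℕ) : ℝ) = (m:ℝ) - 1 := by
        have : (1:ℕ) ≤ m := hm
        push_cast [Nat.cast_sub this]
        ring
      rw [this]
      ring
    rw [h1, Real.rpow_add hL0, Real.rpow_natCast, Real.sqrt_eq_rpow]
  rw [hrpow]
  calc (1/2 : ℝ) * (L^(m-1) * Real.sqrt L) ≤ (Good.card : ℝ) := hfinal
    _ ≤ (S.ncard : ℝ) := hcount
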